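/- Let σ ∈ (0,2), Δx > 0, and let k ≥ 1 be an integer with y_k = kΔx. Suppose real numbers W_i^k, W_{i+1}^k, W_{i−1}^k, W_i^{k+1}, W_i^{k−1} satisfy y_k^{1−σ}(W_{i+1}^k + W_{i−1}^k + W_i^{k+1} + W_i^{k−1} − 4W_i^k)/Δx² + (1−σ) y_k^{−σ}(W_i^{k+1} − W_i^k)/Δx = 0, together with W_{i+1}^k ≤ W_i^k, W_{i−1}^k ≤ W_i^k and W_i^{k−1} ≤ W_i^k. Then W_i^{k+1} ≥ W_i^k. -/

import Mathlib

/-- One-node step of the discrete maximum principle: if the discrete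
extension operator vanishes at a node `(i,k)` with `k ≥ 1`, `y_k = kΔx`, and the value
`Wik` dominates its lateral and lower neighbors, then the value above dominates it. -/
theorem stmt8 (σ Δx : ℝ) (hσ : σ ∈ Set.Ioo (0:ℝ) 2) (hΔx : 0 < Δx)
    (k : ℕ) (hk : 1 ≤ k) (Wik Wip Wim Wup Wdn : ℝ)
    (heq : ((k : ℝ) * Δx) ^ (1 - σ) * (Wip + Wim + Wup + Wdn - 4 * Wik) / Δx ^ 2
        + (1 - σ) * ((k : ℝ) * Δx) ^ (-σ) * (Wup - Wik) / Δx = 0)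
    (h1 : Wip ≤ Wik) (h2 : Wim ≤ Wik) (h3 : Wdn ≤ Wik) :
    Wik ≤ Wup := by
  obtain ⟨hσ0, hσ2⟩ := hσ
  have hk1 : (1:ℝ) ≤ (k:ℝ) := by exact_mod_cast hk
  have hy : (0:ℝ) < (k : ℝ) * Δx := by positivity
  have hc : (0:ℝ) < ((k : ℝ) * Δx) ^ (1 - σ) := Real.rpow_pos_of_pos hy _
  have hneg : ((k : ℝ) * Δx) ^ (-σ) = ((k : ℝ) * Δx) ^ (1 - σ) / ((k : ℝ) * Δx) := by
    rw [show (-σ) = (1 - σ) - 1 by ring, Real.rpow_sub hy, Real.rpow_one]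
  rw [hneg] at heq
  set c := ((k : ℝ) * Δx) ^ (1 - σ) with hcdef
  have hΔ2 : (0:ℝ) < Δx ^ 2 := by positivity
  have key : (Wip + Wim + Wup + Wdn - 4 * Wik) * k + (1 - σ) * (Wup - Wik) = 0 := by
    have h := heq
    field_simp at h
    have hne : c * Δx ^ 2 ≠ 0 := by positivity
    have h' : c * Δx ^ 2 *
        ((Wip + Wim + Wup + Wdn - 4 * Wik) * k + (1 - σ) * (Wup - Wik)) = 0 := by
      linear_combination Δx ^ 2 * h
    exact (mul_eq_zero.1 h').resolve_left hne
  nlinarith [key, sq_nonneg (Wup - Wik), mul_nonneg (sub_nonneg.2 h1) (le_of_lt hy)]
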